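/- Let k ≥ 3 be an integer and let 0 ≤ a < b ≤ 1. If b < (k-1)/k, or if a > 1/k, then the Hausdorff dimension of W_k(a,b) is strictly positive. -/

import Mathlib

open scoped ENNReal

/-- The `k`-transformation `x ↦ k·x mod 1`. -/
noncomputable def Tmap (k : ℕ) (x : ℝ) : ℝ := Int.fract ((k : ℝ) * x)

/-- The survivor set of the `k`-transformation with hole `(a,b)`. -/
def W (k : ℕ) (a b : ℝ) : Set ℝ :=
  {x | x ∈ Set.Ico (0 : ℝ) 1 ∧ ∀ n : ℕ, (Tmap k)^[n] x ∉ Set.Ioo a b}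

/-- The generalized Cantor set `C_k`. -/
def Ck (k : ℕ) : Set ℝ :=
  {x | ∃ a : ℕ → ℕ, (∀ n, a n = 0 ∨ a n = k - 1) ∧
    x = ∑' n : ℕ, (a n : ℝ) / (k : ℝ) ^ (n + 1)}

/-- The `n`-th `k`-ary digit of `x`. -/
noncomputable def digit (k : ℕ) (n : ℕ) (x : ℝ) : ℤ :=
  ⌊(k : ℝ) ^ (n + 1) * x⌋ % (k : ℤ)

open Classical in
/-- The generalized Cantor function `g_k`. -/
noncomputable def gk (k : ℕ) (x : ℝ) : ℝ :=
  if x = 1 then 1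
  else if ∀ n, digit k n x = 0 ∨ digit k n x = (k : ℤ) - 1 then
    ∑' n : ℕ, (digit k n x : ℝ) / (((k : ℝ) - 1) * 2 ^ (n + 1))
  else
    (∑ n ∈ Finset.range (sInf {n : ℕ | ¬(digit k n x = 0 ∨ digit k n x = (k : ℤ) - 1)}),
      (digit k n x : ℝ) / (((k : ℝ) - 1) * 2 ^ (n + 1))) +
    1 / 2 ^ (sInf {n : ℕ | ¬(digit k n x = 0 ∨ digit k n x = (k : ℤ) - 1)} + 1)

/-- The Thue–Morse sequence: parity of the number of 1s in the binary expansion. -/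
def tm (n : ℕ) : ℕ := (Nat.digits 2 n).sum % 2

noncomputable section StmtAux

/-- value of a boolean digit -/
def bvv (ε : ℕ → Bool) (j : ℕ) : ℝ := if ε j then 1 else 0

lemma bvv_nonneg (ε j) : 0 ≤ bvv ε j := by unfold bvv; split <;> norm_num

lemma bvv_le_one (ε j) : bvv ε j ≤ 1 := by unfold bvv; split <;> norm_num

/-- Cantor-type value with ratio r -/
def geo (r : ℝ) (ε : ℕ → Bool) : ℝ := ∑' j : ℕ, bvv ε j * r ^ (j + 1)

variable {r : ℝ} {ε ε' : ℕ → Bool} {j : ℕ}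

lemma summable_pow_shift (h0 : 0 ≤ r) (h1 : r < 1) (c : ℕ) :
    Summable (fun j : ℕ => r ^ (j + c)) := by
  have := (summable_geometric_of_lt_one h0 h1).mul_left (r ^ c)
  refine this.congr fun j => ?_
  rw [← pow_add]; ring_nf

lemma tsum_pow_shift (h0 : 0 ≤ r) (h1 : r < 1) (c : ℕ) :
    ∑' j : ℕ, r ^ (j + c) = r ^ c * (1 - r)⁻¹ := by
  have : ∀ j : ℕ, r ^ (j + c) = r ^ c * r ^ j := fun j => by rw [pow_add]; ring
  simp_rw [this]
  rw [tsum_mul_left, tsum_geometric_of_lt_one h0 h1]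

lemma summable_geo_gen (h0 : 0 ≤ r) (h1 : r < 1) (ε : ℕ → Bool) (c : ℕ) :
    Summable (fun j : ℕ => bvv ε j * r ^ (j + c)) := by
  refine Summable.of_nonneg_of_le (fun j => mul_nonneg (bvv_nonneg _ _) (pow_nonneg h0 _))
    (fun j => ?_) (summable_pow_shift h0 h1 c)
  nlinarith [bvv_le_one ε j, bvv_nonneg ε j, pow_nonneg h0 (j + c)]

lemma summable_geo (h0 : 0 ≤ r) (h1 : r < 1) (ε : ℕ → Bool) :
    Summable (fun j : ℕ => bvv ε j * r ^ (j + 1)) := summable_geo_gen h0 h1 ε 1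

lemma geo_nonneg (h0 : 0 ≤ r) (ε : ℕ → Bool) : 0 ≤ geo r ε :=
  tsum_nonneg fun j => mul_nonneg (bvv_nonneg _ _) (pow_nonneg h0 _)

lemma geo_le (h0 : 0 ≤ r) (h1 : r < 1) (ε : ℕ → Bool) : geo r ε ≤ r * (1 - r)⁻¹ := by
  have h := Summable.tsum_le_tsum (f := fun j : ℕ => bvv ε j * r ^ (j + 1))
    (g := fun j : ℕ => r ^ (j + 1)) (fun j => by
      show bvv ε j * r ^ (j + 1) ≤ r ^ (j + 1)
      nlinarith [bvv_le_one ε j, bvv_nonneg ε j, pow_nonneg h0 (j + 1)])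
    (summable_geo h0 h1 ε) (summable_pow_shift h0 h1 1)
  calc geo r ε ≤ ∑' j : ℕ, r ^ (j + 1) := h
  _ = r ^ 1 * (1 - r)⁻¹ := tsum_pow_shift h0 h1 1
  _ = r * (1 - r)⁻¹ := by ring

/-- tail bound : the tail starting at index `c` is between 0 and `r^(c+1)*(1-r)⁻¹`. -/
lemma geo_tail_bounds (h0 : 0 ≤ r) (h1 : r < 1) (ε : ℕ → Bool) (c : ℕ) :
    0 ≤ (∑' j : ℕ, bvv ε (j + c) * r ^ (j + c + 1)) ∧
      (∑' j : ℕ, bvv ε (j + c) * r ^ (j + c + 1)) ≤ r ^ (c + 1) * (1 - r)⁻¹ := by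
  have hsum : Summable (fun j : ℕ => bvv ε (j + c) * r ^ (j + c + 1)) := by
    refine Summable.of_nonneg_of_le (fun j => mul_nonneg (bvv_nonneg _ _) (pow_nonneg h0 _))
      (fun j => ?_) (summable_pow_shift h0 h1 (c + 1))
    simp only [show ∀ j : ℕ, j + c + 1 = j + (c+1) from fun j => by omega]
    nlinarith [bvv_le_one ε (j + c), bvv_nonneg ε (j + c), pow_nonneg h0 (j + (c + 1))]
  constructor
  · exact tsum_nonneg fun j => mul_nonneg (bvv_nonneg _ _) (pow_nonneg h0 _)
  · have h := Summable.tsum_le_tsum (f := fun j : ℕ => bvv ε (j + c) * r ^ (j + c + 1))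
      (g := fun j : ℕ => r ^ (j + (c + 1))) (fun j => by
        simp only [show ∀ j : ℕ, j + c + 1 = j + (c+1) from fun j => by omega]
        nlinarith [bvv_le_one ε (j + c), bvv_nonneg ε (j + c), pow_nonneg h0 (j + (c+1))])
      hsum (summable_pow_shift h0 h1 (c + 1))
    calc (∑' j : ℕ, bvv ε (j + c) * r ^ (j + c + 1)) ≤ ∑' j : ℕ, r ^ (j + (c + 1)) := h
    _ = r ^ (c + 1) * (1 - r)⁻¹ := tsum_pow_shift h0 h1 (c + 1)

/-- split of geo at index c -/
lemma geo_split (h0 : 0 ≤ r) (h1 : r < 1) (ε : ℕ → Bool) (c : ℕ) :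
    geo r ε = (∑ j ∈ Finset.range c, bvv ε j * r ^ (j + 1))
      + ∑' j : ℕ, bvv ε (j + c) * r ^ (j + c + 1) :=
  (Summable.sum_add_tsum_nat_add c (summable_geo h0 h1 ε)).symm


lemma abs_bvv_sub (hne : ε j ≠ ε' j) : |bvv ε j - bvv ε' j| = 1 := by
  unfold bvv
  cases h1 : ε j <;> cases h2 : ε' j <;> simp [h1, h2] at hne ⊢ <;> norm_num

lemma geo_diff_le (h0 : 0 ≤ r) (h1 : r < 1) (ε ε' : ℕ → Bool) (c : ℕ)
    (hlt : ∀ i < c, ε i = ε' i) :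
    |geo r ε - geo r ε'| ≤ 2 * (r ^ (c + 1) * (1 - r)⁻¹) := by
  have hs := geo_split h0 h1 ε c
  have hs' := geo_split h0 h1 ε' c
  have hfin : (∑ j ∈ Finset.range c, bvv ε j * r ^ (j + 1))
      = ∑ j ∈ Finset.range c, bvv ε' j * r ^ (j + 1) := by
    refine Finset.sum_congr rfl fun i hi => ?_
    rw [show bvv ε i = bvv ε' i by unfold bvv; rw [hlt i (Finset.mem_range.1 hi)]]
  obtain ⟨ht0, ht1⟩ := geo_tail_bounds h0 h1 ε c
  obtain ⟨ht0', ht1'⟩ := geo_tail_bounds h0 h1 ε' c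
  rw [abs_le]
  constructor <;> nlinarith [hs, hs', hfin]

lemma geo_sep (h0 : 0 < r) (h5 : r ≤ 1 / 5) (ε ε' : ℕ → Bool) (c : ℕ)
    (hlt : ∀ i < c, ε i = ε' i) (hne : ε c ≠ ε' c) :
    r ^ (c + 1) / 2 ≤ |geo r ε - geo r ε'| := by
  have h1 : r < 1 := by linarith
  have hs := geo_split h0.le h1 ε (c + 1)
  have hs' := geo_split h0.le h1 ε' (c + 1)
  have hfin : (∑ j ∈ Finset.range (c + 1), bvv ε j * r ^ (j + 1))
      = (∑ j ∈ Finset.range c, bvv ε j * r ^ (j + 1)) + bvv ε c * r ^ (c + 1) :=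
    Finset.sum_range_succ _ c
  have hfin' : (∑ j ∈ Finset.range (c + 1), bvv ε' j * r ^ (j + 1))
      = (∑ j ∈ Finset.range c, bvv ε' j * r ^ (j + 1)) + bvv ε' c * r ^ (c + 1) :=
    Finset.sum_range_succ _ c
  have heq : (∑ j ∈ Finset.range c, bvv ε j * r ^ (j + 1))
      = ∑ j ∈ Finset.range c, bvv ε' j * r ^ (j + 1) := by
    refine Finset.sum_congr rfl fun i hi => ?_
    rw [show bvv ε i = bvv ε' i by unfold bvv; rw [hlt i (Finset.mem_range.1 hi)]]
  obtain ⟨ht0, ht1⟩ := geo_tail_bounds h0.le h1 ε (c + 1)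
  obtain ⟨ht0', ht1'⟩ := geo_tail_bounds h0.le h1 ε' (c + 1)
  have habs := abs_bvv_sub hne
  -- difference is (bvv ε c - bvv ε' c) * r^(c+1) + (tail - tail')
  have hdiff : geo r ε - geo r ε' = (bvv ε c - bvv ε' c) * r ^ (c + 1)
      + ((∑' j : ℕ, bvv ε (j + (c + 1)) * r ^ (j + (c + 1) + 1))
        - (∑' j : ℕ, bvv ε' (j + (c + 1)) * r ^ (j + (c + 1) + 1))) := by
    rw [hs, hs', hfin, hfin', heq]; ring
  have hpow : 0 < r ^ (c + 1) := pow_pos h0 _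
  -- (1-r)⁻¹ ≤ 5/4
  have hu : (1 - r) * (1 - r)⁻¹ = 1 := mul_inv_cancel₀ (by linarith)
  have hu2 : (0:ℝ) ≤ (1 - r)⁻¹ := inv_nonneg.2 (by linarith)
  have hu3 : (1 - r)⁻¹ ≤ 5 / 4 := by nlinarith
  have htb : r ^ (c + 1 + 1) * (1 - r)⁻¹ ≤ r ^ (c + 1) / 4 := by
    have : r ^ (c + 1 + 1) = r ^ (c + 1) * r := by ring
    rw [this]
    nlinarith
  rcases abs_cases (bvv ε c - bvv ε' c) with ⟨he, _⟩ | ⟨he, _⟩ <;>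
  · rw [habs] at he
    rcases abs_cases (geo r ε - geo r ε') with ⟨hg, _⟩ | ⟨hg, _⟩ <;> nlinarith

lemma geo_injective (h0 : 0 < r) (h5 : r ≤ 1 / 5) : Function.Injective (geo r) := by
  intro ε ε' h
  by_contra hne
  obtain ⟨j, hj⟩ := Function.ne_iff.1 hne
  have hex : ∃ i, ε i ≠ ε' i := ⟨j, hj⟩
  classical
  set c := Nat.find hex with hc
  have h1 := geo_sep h0 h5 ε ε' c (fun i hi => not_not.1 (Nat.find_min hex hi)) (Nat.find_spec hex)
  rw [h, sub_self, abs_zero] at h1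
  have := pow_pos h0 (c + 1)
  linarith

/-- prepend `true` -/
def bcons (ε : ℕ → Bool) : ℕ → Bool := fun j => match j with
  | 0 => true
  | j + 1 => ε j

lemma geo_bcons (h0 : 0 ≤ r) (h1 : r < 1) (ε : ℕ → Bool) :
    geo r (bcons ε) = r + r * geo r ε := by
  have hsum := summable_geo h0 h1 (bcons ε)
  have := Summable.tsum_eq_zero_add hsum
  rw [geo, this]
  have h2 : ∀ j : ℕ, bvv (bcons ε) (j + 1) * r ^ (j + 1 + 1) = r * (bvv ε j * r ^ (j + 1)) := by
    intro j
    have : bvv (bcons ε) (j + 1) = bvv ε j := by unfold bvv bcons; rfl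
    rw [this]; ring
  simp_rw [h2]
  rw [tsum_mul_left]
  have h3 : bvv (bcons ε) 0 = 1 := by unfold bvv bcons; rfl
  rw [h3, geo]
  ring


lemma geo_half_surj : Set.Icc (0:ℝ) 1 ⊆ Set.range (geo 2⁻¹) := by
  intro x hx
  obtain ⟨hx0, hx1⟩ := hx
  rcases eq_or_lt_of_le hx1 with h1 | h1
  · refine ⟨fun _ => true, ?_⟩
    have : ∀ j : ℕ, bvv (fun _ => true) j * (2⁻¹:ℝ) ^ (j + 1) = (2⁻¹:ℝ) ^ (j + 1) := by
      intro j; unfold bvv; norm_num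
    rw [geo]
    simp_rw [this]
    rw [tsum_pow_shift (by norm_num) (by norm_num) 1, h1]
    norm_num
  · classical
    set ε : ℕ → Bool := fun j => decide (⌊(2:ℝ) ^ (j + 1) * x⌋ % 2 = 1) with hε
    have hd : ∀ j, bvv ε j = ((⌊(2:ℝ) ^ (j + 1) * x⌋ % 2 : ℤ) : ℝ) := by
      intro j
      rcases Int.emod_two_eq_zero_or_one ⌊(2:ℝ) ^ (j + 1) * x⌋ with h | h <;>
        simp [bvv, hε, h]
    have hkey : ∀ n : ℕ, (∑ j ∈ Finset.range n, bvv ε j * (2⁻¹:ℝ) ^ (j + 1))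
        = (⌊(2:ℝ) ^ n * x⌋ : ℝ) / 2 ^ n := by
      intro n
      induction n with
      | zero =>
        simp only [Finset.range_zero, Finset.sum_empty, pow_zero, one_mul]
        rw [show ⌊x⌋ = 0 from Int.floor_eq_zero_iff.2 ⟨hx0, h1⟩]
        norm_num
      | succ n ih =>
        rw [Finset.sum_range_succ, ih, hd n]
        set q := ⌊(2:ℝ) ^ (n + 1) * x⌋ with hq
        set p := ⌊(2:ℝ) ^ n * x⌋ with hp
        have hps : (2:ℝ) ^ (n+1) = 2 * 2 ^ n := by ring
        have h2a : 2 * p ≤ q := by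
          rw [hq]
          refine Int.le_floor.2 ?_
          push_cast
          have := Int.floor_le ((2:ℝ) ^ n * x)
          rw [← hp] at this
          nlinarith [hps]
        have hq2 : q < 2 * p + 2 := by
          rw [hq]
          refine Int.floor_lt.2 ?_
          push_cast
          have := Int.lt_floor_add_one ((2:ℝ) ^ n * x)
          rw [← hp] at this
          nlinarith [hps]
        have hqe : q = 2 * p + q % 2 := by omega
        have h2n : (0:ℝ) < 2 ^ n := by positivity
        have h2n1 : (0:ℝ) < 2 ^ (n + 1) := by positivity
        have he : (q:ℝ) = 2 * (p:ℝ) + ((q % 2 : ℤ) : ℝ) := by exact_mod_cast hqe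
        rw [he]
        field_simp
        rw [one_div, inv_pow]; field_simp; ring
    have hsum : Summable (fun j : ℕ => bvv ε j * (2⁻¹:ℝ) ^ (j + 1)) :=
      summable_geo (by norm_num) (by norm_num) ε
    have hts : Filter.Tendsto (fun n => ∑ j ∈ Finset.range n, bvv ε j * (2⁻¹:ℝ) ^ (j + 1))
        Filter.atTop (nhds (geo 2⁻¹ ε)) := hsum.hasSum.tendsto_sum_nat
    have hts2 : Filter.Tendsto (fun n => ∑ j ∈ Finset.range n, bvv ε j * (2⁻¹:ℝ) ^ (j + 1))
        Filter.atTop (nhds x) := by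
      have hxs : ∀ n : ℕ, x - (∑ j ∈ Finset.range n, bvv ε j * (2⁻¹:ℝ) ^ (j + 1))
          = Int.fract ((2:ℝ) ^ n * x) / 2 ^ n := by
        intro n
        rw [hkey n]
        have h2n : (0:ℝ) < 2 ^ n := by positivity
        rw [Int.fract, sub_div, mul_div_cancel_left₀ x (ne_of_gt h2n)]
      have htz : Filter.Tendsto
          (fun n => x - (∑ j ∈ Finset.range n, bvv ε j * (2⁻¹:ℝ) ^ (j + 1)))
          Filter.atTop (nhds 0) := by
        refine squeeze_zero (fun n => ?_) (fun n => ?_)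
          (tendsto_pow_atTop_nhds_zero_of_lt_one (by norm_num : (0:ℝ) ≤ 2⁻¹) (by norm_num))
        · rw [hxs n]
          exact div_nonneg (Int.fract_nonneg _) (by positivity)
        · rw [hxs n]
          calc Int.fract ((2:ℝ) ^ n * x) / 2 ^ n ≤ 1 / 2 ^ n := by
                gcongr
                · exact (Int.fract_lt_one _).le
          _ = (2⁻¹:ℝ) ^ n := by rw [one_div, inv_pow]
      have := Filter.Tendsto.const_sub x htz
      simpa using this
    exact ⟨ε, tendsto_nhds_unique hts hts2⟩


lemma holderOnWith_of_abs {C α : NNReal} {f : ℝ → ℝ} {s : Set ℝ}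
    (h : ∀ x ∈ s, ∀ y ∈ s, |f x - f y| ≤ (C:ℝ) * |x - y| ^ (α:ℝ)) :
    HolderOnWith C α f s := by
  intro x hx y hy
  rw [edist_dist, edist_dist, Real.dist_eq, Real.dist_eq]
  calc ENNReal.ofReal |f x - f y| ≤ ENNReal.ofReal ((C:ℝ) * |x - y| ^ (α:ℝ)) :=
        ENNReal.ofReal_le_ofReal (h x hx y hy)
  _ = (C : ℝ≥0∞) * ENNReal.ofReal |x - y| ^ (α:ℝ) := by
      rw [ENNReal.ofReal_mul C.coe_nonneg,
        ENNReal.ofReal_rpow_of_nonneg (abs_nonneg _) α.coe_nonneg, ENNReal.ofReal_coe_nnreal]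

lemma dimH_geo_pos (h0 : 0 < r) (h5 : r ≤ 1 / 5) : 0 < dimH (Set.range (geo r)) := by
  classical
  have h1 : r < 1 := by linarith
  have hinj := geo_injective h0 h5
  have hlog2 : (0:ℝ) < Real.log 2 := Real.log_pos (by norm_num)
  have hrinv : (2:ℝ) ≤ r⁻¹ := by
    rw [le_inv_comm₀ (by norm_num) h0]
    linarith [h5]
  have hloginv : (0:ℝ) < Real.log r⁻¹ := Real.log_pos (by linarith)
  set α : NNReal := Real.toNNReal (Real.log 2 / Real.log r⁻¹) with hα
  have hαc : (α:ℝ) = Real.log 2 / Real.log r⁻¹ :=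
    Real.coe_toNNReal _ (le_of_lt (div_pos hlog2 hloginv))
  have hαpos : 0 < α := Real.toNNReal_pos.2 (div_pos hlog2 hloginv)
  have hα1 : (α:ℝ) ≤ 1 := by
    rw [hαc]
    rw [div_le_one hloginv]
    exact Real.log_le_log (by norm_num) hrinv
  have hrα : r ^ (α:ℝ) = 2⁻¹ := by
    rw [Real.rpow_def_of_pos h0, hαc, Real.log_inv]
    have hlogr : Real.log r ≠ 0 := by
      rw [Real.log_inv] at hloginv; linarith
    have hme : Real.log r * (Real.log 2 / -Real.log r) = -Real.log 2 := by
      rw [div_neg, mul_neg, neg_inj, mul_div_assoc', mul_comm, mul_div_assoc,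
        div_self hlogr, mul_one]
    rw [hme, Real.exp_neg, Real.exp_log (by norm_num)]
  set f : ℝ → ℝ := fun x => geo 2⁻¹ (Function.invFun (geo r) x) with hf
  have hli : ∀ ε : ℕ → Bool, Function.invFun (geo r) (geo r ε) = ε :=
    fun ε => Function.leftInverse_invFun hinj ε
  -- Hölder estimate
  have hhold : ∀ x ∈ Set.range (geo r), ∀ y ∈ Set.range (geo r),
      |f x - f y| ≤ 8 * |x - y| ^ (α:ℝ) := by
    rintro x ⟨ε, rfl⟩ y ⟨ε', rfl⟩
    rw [hf]
    simp only [hli]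
    by_cases hee : ε = ε'
    · subst hee
      simp only [sub_self, abs_zero]
      positivity
    · obtain ⟨j, hj⟩ := Function.ne_iff.1 hee
      have hex : ∃ i, ε i ≠ ε' i := ⟨j, hj⟩
      set c := Nat.find hex with hc
      have hlt : ∀ i < c, ε i = ε' i := fun i hi => not_not.1 (Nat.find_min hex hi)
      have hup : |geo 2⁻¹ ε - geo 2⁻¹ ε'| ≤ 4 * (2⁻¹:ℝ) ^ (c + 1) := by
        have := geo_diff_le (r := 2⁻¹) (by norm_num) (by norm_num) ε ε' c hlt
        calc |geo 2⁻¹ ε - geo 2⁻¹ ε'| ≤ 2 * ((2⁻¹:ℝ) ^ (c + 1) * (1 - 2⁻¹)⁻¹) := this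
        _ = 4 * (2⁻¹:ℝ) ^ (c + 1) := by
              rw [show ((1:ℝ) - 2⁻¹)⁻¹ = 2 by norm_num]; ring
      have hsep := geo_sep h0 h5 ε ε' c hlt (Nat.find_spec hex)
      have habs : (0:ℝ) ≤ |geo r ε - geo r ε'| := abs_nonneg _
      have hpow : (0:ℝ) < r ^ (c + 1) := pow_pos h0 _
      have hrp : (r ^ (c + 1) / 2) ^ (α:ℝ) ≤ |geo r ε - geo r ε'| ^ (α:ℝ) :=
        Real.rpow_le_rpow (by positivity) hsep α.coe_nonneg
      have hval : (r ^ (c + 1) / 2) ^ (α:ℝ) = (2⁻¹:ℝ) ^ (c + 1) / 2 ^ (α:ℝ) := by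
        rw [Real.div_rpow (by positivity) (by norm_num)]
        congr 1
        rw [← Real.rpow_natCast r (c + 1), ← Real.rpow_mul h0.le, mul_comm,
          Real.rpow_mul h0.le, hrα, Real.rpow_natCast]
      have h2α : (2:ℝ) ^ (α:ℝ) ≤ 2 := by
        calc (2:ℝ) ^ (α:ℝ) ≤ (2:ℝ) ^ (1:ℝ) :=
          Real.rpow_le_rpow_of_exponent_le (by norm_num) hα1
        _ = 2 := Real.rpow_one 2
      have h2αpos : (0:ℝ) < (2:ℝ) ^ (α:ℝ) := Real.rpow_pos_of_pos (by norm_num) _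
      have hge : (2⁻¹:ℝ) ^ (c + 1) / 2 ≤ |geo r ε - geo r ε'| ^ (α:ℝ) := by
        refine le_trans ?_ (hval ▸ hrp)
        have hp2 : (0:ℝ) < (2⁻¹:ℝ) ^ (c + 1) := by positivity
        rw [div_le_div_iff₀ (by norm_num) h2αpos]
        nlinarith
      nlinarith [hge, hup]
  have hH : HolderOnWith 8 α f (Set.range (geo r)) := by
    refine holderOnWith_of_abs ?_
    intro x hx y hy
    simpa using hhold x hx y hy
  have himg : Set.Icc (0:ℝ) 1 ⊆ f '' Set.range (geo r) := by
    intro t ht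
    obtain ⟨ε, hε⟩ := geo_half_surj ht
    exact ⟨geo r ε, Set.mem_range_self ε, by rw [hf]; simp only [hli]; exact hε⟩
  have hdim1 : dimH (Set.Icc (0:ℝ) 1) = 1 := by
    rw [Real.dimH_of_nonempty_interior (E := ℝ)]
    · simp
    · rw [interior_Icc]
      exact ⟨1/2, by norm_num⟩
  have hchain : (1:ℝ≥0∞) ≤ dimH (Set.range (geo r)) / α := by
    calc (1:ℝ≥0∞) = dimH (Set.Icc (0:ℝ) 1) := hdim1.symm
    _ ≤ dimH (f '' Set.range (geo r)) := dimH_mono himg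
    _ ≤ dimH (Set.range (geo r)) / α := hH.dimH_image_le hαpos
  by_contra hcon
  push_neg at hcon
  have : dimH (Set.range (geo r)) = 0 := le_antisymm hcon zero_le
  rw [this, ENNReal.zero_div] at hchain
  exact (by norm_num : ¬ ((1:ℝ≥0∞) ≤ 0)) hchain


lemma key_split (k m : ℕ) (hk : 3 ≤ k) (hm : 1 ≤ m) (δ : ℕ → Bool) (n : ℕ) :
    ∃ t : ℝ, 0 ≤ t ∧ t ≤ ((k:ℝ))⁻¹ * (1 - ((k:ℝ)^m)⁻¹)⁻¹ ∧
      Int.fract ((k:ℝ)^n * geo (((k:ℝ)^m)⁻¹) δ) = Int.fract t ∧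
      Int.fract ((k:ℝ)^n - (k:ℝ)^n * geo (((k:ℝ)^m)⁻¹) δ) = Int.fract (-t) := by
  have hk3 : (3:ℝ) ≤ (k:ℝ) := by exact_mod_cast hk
  have hk1 : (1:ℝ) ≤ (k:ℝ) := by linarith
  have hk0 : (0:ℝ) < (k:ℝ) := by linarith
  set kR : ℝ := (k:ℝ) with hkR
  set r : ℝ := (kR ^ m)⁻¹ with hr
  have hkm3 : (3:ℝ) ≤ kR ^ m := by
    calc (3:ℝ) ≤ kR := hk3
    _ = kR ^ 1 := (pow_one kR).symm
    _ ≤ kR ^ m := pow_le_pow_right₀ hk1 hm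
  have h0 : 0 < r := by rw [hr]; positivity
  have hr1 : r < 1 := by
    rw [hr]
    rw [inv_lt_one_iff₀]
    right; linarith
  set N := n / m with hN
  have hsum0 : Summable (fun j : ℕ => bvv δ j * r ^ (j + 1)) := summable_geo h0.le hr1 δ
  have hsum : Summable (fun j : ℕ => kR ^ n * (bvv δ j * r ^ (j + 1))) := hsum0.mul_left _
  have hmul : kR ^ n * geo r δ = ∑' j : ℕ, kR ^ n * (bvv δ j * r ^ (j + 1)) :=
    (tsum_mul_left).symm
  have hsplit := Summable.sum_add_tsum_nat_add N hsum
  set t : ℝ := ∑' j : ℕ, kR ^ n * (bvv δ (j + N) * r ^ (j + N + 1)) with htdef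
  -- the finite part is an integer
  set I : ℤ := ∑ j ∈ Finset.range N, (if δ j then (k:ℤ) ^ (n - (j + 1) * m) else 0) with hI
  have hIcast : (I : ℝ) = ∑ j ∈ Finset.range N, kR ^ n * (bvv δ j * r ^ (j + 1)) := by
    rw [hI]
    push_cast
    refine Finset.sum_congr rfl fun j hj => ?_
    have hjN : j + 1 ≤ N := Finset.mem_range.1 hj
    have hle : (j + 1) * m ≤ n :=
      le_trans (Nat.mul_le_mul_right m hjN) (Nat.div_mul_le_self n m)
    have hrp : r ^ (j + 1) = (kR ^ ((j + 1) * m))⁻¹ := by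
      rw [hr, inv_pow, ← pow_mul, mul_comm m (j + 1)]
    have hX : kR ^ (n - (j + 1) * m) * kR ^ ((j + 1) * m) = kR ^ n := by
      rw [← pow_add, Nat.sub_add_cancel hle]
    have hpow : kR ^ n * r ^ (j + 1) = kR ^ (n - (j + 1) * m) := by
      rw [hrp, ← hX, mul_inv_cancel_right₀ (by positivity)]
    by_cases hδ : δ j <;> simp [bvv, hδ, ← mul_assoc, hpow] <;> rfl
  have ht0 : 0 ≤ t :=
    tsum_nonneg fun j => mul_nonneg (by positivity)
      (mul_nonneg (bvv_nonneg _ _) (pow_nonneg h0.le _))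
  have hnm : n < (N + 1) * m := by
    have h1 := Nat.div_add_mod n m
    have h2 := Nat.mod_lt n (show 0 < m by omega)
    calc n = m * N + n % m := by rw [hN]; omega
    _ < m * N + m := by omega
    _ = (N + 1) * m := by ring
  have hterm : ∀ j : ℕ, kR ^ n * (bvv δ (j + N) * r ^ (j + N + 1)) ≤ kR⁻¹ * r ^ j := by
    intro j
    have hsplitpow : r ^ (j + N + 1) = r ^ (N + 1) * r ^ j := by
      rw [← pow_add]; ring_nf
    have hrp : r ^ (N + 1) = (kR ^ ((N + 1) * m))⁻¹ := by
      rw [hr, inv_pow, ← pow_mul, mul_comm m (N + 1)]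
    have hme : kR ^ (n + 1) ≤ kR ^ ((N + 1) * m) := pow_le_pow_right₀ hk1 hnm
    have h1 : kR ^ n * r ^ (N + 1) ≤ kR⁻¹ := by
      rw [hrp]
      have hpos1 : (0:ℝ) < kR ^ (n + 1) := by positivity
      have hinvle : (kR ^ ((N + 1) * m))⁻¹ ≤ (kR ^ (n + 1))⁻¹ :=
        inv_anti₀ hpos1 hme
      calc kR ^ n * (kR ^ ((N + 1) * m))⁻¹ ≤ kR ^ n * (kR ^ (n + 1))⁻¹ := by
            exact mul_le_mul_of_nonneg_left hinvle (by positivity)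
      _ = kR⁻¹ := by
            rw [pow_succ, mul_inv]
            rw [← mul_assoc, mul_inv_cancel₀ (by positivity), one_mul]
    have hb1 := bvv_le_one δ (j + N)
    have hb0 := bvv_nonneg δ (j + N)
    have hrj : (0:ℝ) ≤ r ^ j := pow_nonneg h0.le _
    have hkn : (0:ℝ) ≤ kR ^ n := by positivity
    calc kR ^ n * (bvv δ (j + N) * r ^ (j + N + 1))
        ≤ kR ^ n * r ^ (j + N + 1) := by
          have hb : bvv δ (j + N) * r ^ (j + N + 1) ≤ r ^ (j + N + 1) := by
            nlinarith [pow_nonneg h0.le (j + N + 1)]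
          exact mul_le_mul_of_nonneg_left hb hkn
    _ = (kR ^ n * r ^ (N + 1)) * r ^ j := by rw [hsplitpow]; ring
    _ ≤ kR⁻¹ * r ^ j := mul_le_mul_of_nonneg_right h1 hrj
  have htsumr : Summable (fun j : ℕ => kR⁻¹ * r ^ j) :=
    (summable_geometric_of_lt_one h0.le hr1).mul_left _
  have htsub : Summable (fun j : ℕ => kR ^ n * (bvv δ (j + N) * r ^ (j + N + 1))) :=
    (summable_nat_add_iff N).2 hsum
  have htB : t ≤ kR⁻¹ * (1 - r)⁻¹ := by
    calc t ≤ ∑' j : ℕ, kR⁻¹ * r ^ j := Summable.tsum_le_tsum hterm htsub htsumr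
    _ = kR⁻¹ * (1 - r)⁻¹ := by rw [tsum_mul_left, tsum_geometric_of_lt_one h0.le hr1]
  have h1 : kR ^ n * geo r δ = (I : ℝ) + t := by
    rw [hmul, ← hsplit, hIcast]
  refine ⟨t, ht0, htB, ?_, ?_⟩
  · rw [h1, add_comm, Int.fract_add_intCast]
  · have h2 : kR ^ n - kR ^ n * geo r δ = -t + (((k:ℤ) ^ n - I : ℤ) : ℝ) := by
      rw [h1]; push_cast; ring
    rw [h2, Int.fract_add_intCast]

lemma lipschitz_aux (p q : ℝ) (hp : 0 ≤ p) :
    LipschitzWith (Real.toNNReal p) (fun z : ℝ => (z - q) * p) := by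
  refine LipschitzWith.of_dist_le_mul fun x y => ?_
  rw [Real.dist_eq, Real.dist_eq, Real.coe_toNNReal _ hp]
  have : (x - q) * p - (y - q) * p = (x - y) * p := by ring
  rw [this, abs_mul, abs_of_nonneg hp]
  ring_nf
  exact le_refl _


lemma Tmap_iterate (k : ℕ) {x : ℝ} (hx : x ∈ Set.Ico (0:ℝ) 1) (n : ℕ) :
    (Tmap k)^[n] x = Int.fract ((k:ℝ) ^ n * x) := by
  induction n with
  | zero => simpa using (Int.fract_eq_self.2 ⟨hx.1, hx.2⟩).symm
  | succ n ih =>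
    rw [Function.iterate_succ_apply', ih, Tmap]
    have h2 : (k:ℝ) * Int.fract ((k:ℝ) ^ n * x)
        = (k:ℝ) ^ (n + 1) * x - (((k : ℤ) * ⌊(k:ℝ) ^ n * x⌋ : ℤ) : ℝ) := by
      rw [Int.fract]; push_cast; ring
    rw [h2, Int.fract_sub_intCast]

lemma lipschitz_aux2 (p q : ℝ) (hp : 0 ≤ p) :
    LipschitzWith (Real.toNNReal p) (fun z : ℝ => (q - z) * p) := by
  refine LipschitzWith.of_dist_le_mul fun x y => ?_
  rw [Real.dist_eq, Real.dist_eq, Real.coe_toNNReal _ hp]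
  have h2 : (q - x) * p - (q - y) * p = (y - x) * p := by ring
  rw [h2, abs_mul, abs_of_nonneg hp, abs_sub_comm]
  exact le_of_eq (mul_comm _ _)

lemma dimH_W_pos_of_case (k m : ℕ) (hk : 3 ≤ k) (hm : 1 ≤ m) (a b : ℝ) (ha : 0 ≤ a)
    (hab : a < b) (hb : b ≤ 1) (hr5 : (((k:ℝ)) ^ m)⁻¹ ≤ 1 / 5)
    (hB : ((k:ℝ))⁻¹ * (1 - ((k:ℝ) ^ m)⁻¹)⁻¹ ≤ a ∨
      ((k:ℝ))⁻¹ * (1 - ((k:ℝ) ^ m)⁻¹)⁻¹ ≤ 1 - b) :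
    0 < dimH (W k a b) := by
  have hk3 : (3:ℝ) ≤ (k:ℝ) := by exact_mod_cast hk
  set kR : ℝ := (k:ℝ) with hkR
  set r : ℝ := (kR ^ m)⁻¹ with hr
  have h0 : 0 < r := by rw [hr]; positivity
  have hr1 : r < 1 := by rw [hr] at hr5 ⊢; linarith
  have hu : (1 - r) * (1 - r)⁻¹ = 1 := mul_inv_cancel₀ (by linarith)
  have hu0 : (0:ℝ) ≤ (1 - r)⁻¹ := inv_nonneg.2 (by linarith)
  have hu3 : (1 - r)⁻¹ ≤ 5 / 4 := by nlinarith
  have hgle : ∀ ε : ℕ → Bool, geo r ε ≤ 1 / 4 := by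
    intro ε
    have := geo_le h0.le hr1 ε
    nlinarith
  have hEdim := dimH_geo_pos h0 hr5
  rcases hB with hBa | hBb
  · -- hole is above the Cantor set : use x = geo r (bcons ε)
    set A : ℝ → ℝ := fun y => r + r * y with hA
    have hXW : A '' Set.range (geo r) ⊆ W k a b := by
      rintro x ⟨y, ⟨ε, rfl⟩, rfl⟩
      have hxg : A (geo r ε) = geo r (bcons ε) := by
        rw [hA]; simp only []; rw [geo_bcons h0.le hr1]
      rw [hxg]
      have hx01 : geo r (bcons ε) ∈ Set.Ico (0:ℝ) 1 :=
        ⟨geo_nonneg h0.le _, by nlinarith [hgle (bcons ε)]⟩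
      refine ⟨hx01, fun n => ?_⟩
      rw [Tmap_iterate k hx01 n]
      obtain ⟨t, ht0, htB, hfr, _⟩ := key_split k m hk hm (bcons ε) n
      rw [hfr]
      have hta : t ≤ a := le_trans htB hBa
      have ht1 : t < 1 := lt_of_le_of_lt hta (lt_of_lt_of_le hab hb)
      rw [Int.fract_eq_self.2 ⟨ht0, ht1⟩]
      rintro ⟨h1, h2⟩; linarith
    have hEX : Set.range (geo r) ⊆ (fun z => (z - r) * r⁻¹) '' (A '' Set.range (geo r)) := by
      rintro x ⟨ε, rfl⟩
      refine ⟨A (geo r ε), Set.mem_image_of_mem A (Set.mem_range_self ε), ?_⟩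
      rw [hA]; simp only []; field_simp; ring
    have hdim : dimH (Set.range (geo r)) ≤ dimH (W k a b) := by
      calc dimH (Set.range (geo r))
          ≤ dimH ((fun z => (z - r) * r⁻¹) '' (A '' Set.range (geo r))) := dimH_mono hEX
      _ ≤ dimH (A '' Set.range (geo r)) :=
          (lipschitz_aux r⁻¹ r (by positivity)).dimH_image_le _
      _ ≤ dimH (W k a b) := dimH_mono hXW
    exact lt_of_lt_of_le hEdim hdim
  · -- hole is below : use x = 1 - geo r (bcons ε)
    set A : ℝ → ℝ := fun y => 1 - (r + r * y) with hA
    have hXW : A '' Set.range (geo r) ⊆ W k a b := by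
      rintro x ⟨y, ⟨ε, rfl⟩, rfl⟩
      have hxg : A (geo r ε) = 1 - geo r (bcons ε) := by
        rw [hA]; simp only []; rw [geo_bcons h0.le hr1]
      rw [hxg]
      have hgr : r ≤ geo r (bcons ε) := by
        rw [geo_bcons h0.le hr1]
        nlinarith [geo_nonneg h0.le ε]
      have hx01 : 1 - geo r (bcons ε) ∈ Set.Ico (0:ℝ) 1 :=
        ⟨by nlinarith [hgle (bcons ε)], by nlinarith⟩
      refine ⟨hx01, fun n => ?_⟩
      rw [Tmap_iterate k hx01 n]
      obtain ⟨t, ht0, htB, _, hfr2⟩ := key_split k m hk hm (bcons ε) n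
      have hxe : kR ^ n * (1 - geo r (bcons ε)) = kR ^ n - kR ^ n * geo r (bcons ε) := by
        ring
      rw [hxe, hfr2]
      rcases eq_or_lt_of_le ht0 with h0t | h0t
      · rw [← h0t]
        simp only [neg_zero, Int.fract_zero]
        rintro ⟨h1, _⟩; linarith
      · have htb' : t ≤ 1 - b := le_trans htB hBb
        have hbpos : (0:ℝ) < b := lt_of_le_of_lt ha hab
        have ht1 : t < 1 := by linarith
        have hft : Int.fract t = t := Int.fract_eq_self.2 ⟨ht0, ht1⟩
        rw [Int.fract_neg (by rw [hft]; linarith), hft]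
        rintro ⟨h1, h2⟩; linarith
    have hEX : Set.range (geo r) ⊆ (fun z => ((1 - r) - z) * r⁻¹) '' (A '' Set.range (geo r)) := by
      rintro x ⟨ε, rfl⟩
      refine ⟨A (geo r ε), Set.mem_image_of_mem A (Set.mem_range_self ε), ?_⟩
      rw [hA]; simp only []; field_simp; ring
    have hdim : dimH (Set.range (geo r)) ≤ dimH (W k a b) := by
      calc dimH (Set.range (geo r))
          ≤ dimH ((fun z => ((1 - r) - z) * r⁻¹) '' (A '' Set.range (geo r))) := dimH_mono hEX
      _ ≤ dimH (A '' Set.range (geo r)) :=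
          (lipschitz_aux2 r⁻¹ (1 - r) (by positivity)).dimH_image_le _
      _ ≤ dimH (W k a b) := dimH_mono hXW
    exact lt_of_lt_of_le hEdim hdim

lemma choose_m (k : ℕ) (hk : 3 ≤ k) (c : ℝ) (hc : ((k:ℝ))⁻¹ < c) (hc1 : c ≤ 1) :
    ∃ m : ℕ, 1 ≤ m ∧ (((k:ℝ)) ^ m)⁻¹ ≤ 1 / 5 ∧
      ((k:ℝ))⁻¹ * (1 - (((k:ℝ)) ^ m)⁻¹)⁻¹ ≤ c := by
  have hk3 : (3:ℝ) ≤ (k:ℝ) := by exact_mod_cast hk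
  have hkinvpos : (0:ℝ) < (k:ℝ)⁻¹ := by positivity
  have hkinvlt : (k:ℝ)⁻¹ < 1 := by
    rw [inv_lt_one_iff₀]; right; linarith
  obtain ⟨m0, hm0⟩ := exists_pow_lt_of_lt_one (show (0:ℝ) < c - (k:ℝ)⁻¹ by linarith) hkinvlt
  refine ⟨m0 + 2, by omega, ?_, ?_⟩
  all_goals
    have hpe : (((k:ℝ)) ^ (m0 + 2))⁻¹ = ((k:ℝ)⁻¹) ^ (m0 + 2) := (inv_pow _ _).symm
    have hki3 : (k:ℝ)⁻¹ ≤ 3⁻¹ := by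
      rw [inv_le_inv₀ (by linarith) (by norm_num)]; exact hk3
    have h1 : ((k:ℝ)⁻¹) ^ (m0 + 2) ≤ ((k:ℝ)⁻¹) ^ 2 :=
      pow_le_pow_of_le_one hkinvpos.le hkinvlt.le (by omega)
    have h2 : ((k:ℝ)⁻¹) ^ 2 ≤ (3⁻¹:ℝ) ^ 2 := by
      apply pow_le_pow_left₀ hkinvpos.le hki3
    have hrr5 : ((k:ℝ)⁻¹) ^ (m0 + 2) ≤ 1 / 5 := by
      calc ((k:ℝ)⁻¹) ^ (m0 + 2) ≤ (3⁻¹:ℝ) ^ 2 := le_trans h1 h2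
      _ ≤ 1 / 5 := by norm_num
  · rw [hpe]; exact hrr5
  · rw [hpe]
    have h3 : ((k:ℝ)⁻¹) ^ (m0 + 2) < c - (k:ℝ)⁻¹ :=
      lt_of_le_of_lt (pow_le_pow_of_le_one hkinvpos.le hkinvlt.le (by omega)) hm0
    set rr := ((k:ℝ)⁻¹) ^ (m0 + 2) with hrrdef
    have hrr0 : (0:ℝ) ≤ rr := by positivity
    have hrr1 : rr < 1 := by
      calc rr ≤ 1 / 5 := hrr5
      _ < 1 := by norm_num
    have hu : (1 - rr) * (1 - rr)⁻¹ = 1 := mul_inv_cancel₀ (by linarith)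
    have hu0 : (0:ℝ) ≤ (1 - rr)⁻¹ := inv_nonneg.2 (by linarith)
    have hstep : (k:ℝ)⁻¹ ≤ c * (1 - rr) := by nlinarith
    calc (k:ℝ)⁻¹ * (1 - rr)⁻¹ ≤ (c * (1 - rr)) * (1 - rr)⁻¹ :=
        mul_le_mul_of_nonneg_right hstep hu0
    _ = c := by rw [mul_assoc, hu, mul_one]

end StmtAux

/-- if `b < (k-1)/k` or `a > 1/k`, then `dimH W_k(a,b) > 0`. -/
theorem stmt3 (k : ℕ) (hk : 3 ≤ k) (a b : ℝ) (ha : 0 ≤ a) (hab : a < b) (hb : b ≤ 1)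
    (h : b < ((k : ℝ) - 1) / k ∨ 1 / (k : ℝ) < a) :
    0 < dimH (W k a b) := by
  have hk3 : (3:ℝ) ≤ (k:ℝ) := by exact_mod_cast hk
  have hk0 : (0:ℝ) < (k:ℝ) := by linarith
  rcases h with h | h
  · -- b < (k-1)/k
    have hdiv : ((k:ℝ) - 1) / k = 1 - (k:ℝ)⁻¹ := by field_simp
    rw [hdiv] at h
    have hc : (k:ℝ)⁻¹ < 1 - b := by linarith
    have hc1 : 1 - b ≤ 1 := by linarith
    obtain ⟨m, hm, hr5, hB⟩ := choose_m k hk (1 - b) hc hc1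
    exact dimH_W_pos_of_case k m hk hm a b ha hab hb hr5 (Or.inr hB)
  · -- 1/k < a
    rw [one_div] at h
    have hc1 : a ≤ 1 := by linarith
    obtain ⟨m, hm, hr5, hB⟩ := choose_m k hk a h hc1
    exact dimH_W_pos_of_case k m hk hm a b ha hab hb hr5 (Or.inl hB)
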